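/- Let |ψ⟩ ∈ H_A ⊗ H_B, let T be a Hermitian operator on H_B, and let U be a unitary on H_A such that ‖(I_A ⊗ T)|ψ⟩ − (U ⊗ I_B)|ψ⟩‖ ≤ ε. Let T̂ be the regularization of T (defined by T̂ = (T + P)|T + P|⁻¹ where P is the orthogonal projection onto ker T). Then T̂ is unitary and ‖(I ⊗ T̂)|ψ⟩ − (I ⊗ T)|ψ⟩‖ ≤ ε, and consequently ‖(I ⊗ T̂)|ψ⟩ − (U ⊗ I)|ψ⟩‖ ≤ 2ε. -/

import Mathlib

open scoped Kronecker

section RegularizeAux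

open Matrix

lemma kron_conjTranspose' {m n : Type*} [Fintype m] [Fintype n]
    (A : Matrix m m ℂ) (B : Matrix n n ℂ) : (A ⊗ₖ B)ᴴ = Aᴴ ⊗ₖ Bᴴ := by
  ext ⟨a, b⟩ ⟨c, d⟩
  simp [Matrix.conjTranspose_apply, mul_comm]

lemma kron_mem_unitary {m n : Type*} [Fintype m] [Fintype n] [DecidableEq m] [DecidableEq n]
    {A : Matrix m m ℂ} {B : Matrix n n ℂ} (hA : A ∈ Matrix.unitaryGroup m ℂ)
    (hB : B ∈ Matrix.unitaryGroup n ℂ) : A ⊗ₖ B ∈ Matrix.unitaryGroup (m × n) ℂ := by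
  rw [Matrix.mem_unitaryGroup_iff, Matrix.star_eq_conjTranspose, kron_conjTranspose',
    ← Matrix.mul_kronecker_mul]
  rw [Matrix.mem_unitaryGroup_iff] at hA hB
  rw [Matrix.star_eq_conjTranspose] at hA hB
  rw [hA, hB, Matrix.one_kronecker_one]

lemma toEuclideanLin_mul_apply {m : Type*} [Fintype m] [DecidableEq m]
    (A B : Matrix m m ℂ) (x : EuclideanSpace ℂ m) :
    Matrix.toEuclideanLin (A * B) x = Matrix.toEuclideanLin A (Matrix.toEuclideanLin B x) := by
  simp [Matrix.toEuclideanLin_apply, Matrix.mulVec_mulVec]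

lemma norm_toEuclideanLin_unitary {m : Type*} [Fintype m] [DecidableEq m]
    {W : Matrix m m ℂ} (hW : W ∈ Matrix.unitaryGroup m ℂ) (x : EuclideanSpace ℂ m) :
    ‖Matrix.toEuclideanLin W x‖ = ‖x‖ := by
  have h2 : (inner ℂ (Matrix.toEuclideanLin W x) (Matrix.toEuclideanLin W x) : ℂ) =
      inner ℂ x x := by
    rw [← LinearMap.adjoint_inner_right, ← Matrix.toEuclideanLin_conjTranspose_eq_adjoint,
      ← toEuclideanLin_mul_apply]
    rw [Matrix.mem_unitaryGroup_iff'] at hW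
    rw [Matrix.star_eq_conjTranspose] at hW
    rw [hW]
    simp [Matrix.toEuclideanLin_apply, Matrix.one_mulVec]
  rw [@norm_eq_sqrt_re_inner ℂ, @norm_eq_sqrt_re_inner ℂ, h2]

lemma normsq_eucl {m : Type*} [Fintype m] (x : EuclideanSpace ℂ m) :
    ‖x‖ ^ 2 = ∑ i, ‖x i‖ ^ 2 := by
  rw [EuclideanSpace.norm_eq, Real.sq_sqrt (by positivity)]

lemma slice_ineq {m : Type*} [Fintype m] [DecidableEq m] {U : Matrix m m ℂ}
    (hU : U ∈ Matrix.unitaryGroup m ℂ) (c : ℝ) (v : EuclideanSpace ℂ m) :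
    ‖((if c = 0 then 1 else ((Real.sign c : ℝ) : ℂ)) - (c : ℂ)) • v‖ ≤
      ‖(c : ℂ) • v - Matrix.toEuclideanLin U v‖ := by
  set s : ℝ := if c = 0 then 1 else Real.sign c with hs
  have hcoef : ((if c = 0 then 1 else ((Real.sign c : ℝ) : ℂ)) - (c : ℂ)) = ((s - c : ℝ) : ℂ) := by
    rw [hs]; split_ifs <;> push_cast <;> ring
  have hUv : ‖Matrix.toEuclideanLin U v‖ = ‖v‖ := norm_toEuclideanLin_unitary hU v
  have hle : |‖(c : ℂ) • v‖ - ‖Matrix.toEuclideanLin U v‖| ≤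
      ‖(c : ℂ) • v - Matrix.toEuclideanLin U v‖ := abs_norm_sub_norm_le _ _
  have hcv : ‖(c : ℂ) • v‖ = |c| * ‖v‖ := by
    rw [norm_smul, Complex.norm_real, Real.norm_eq_abs]
  have hseq : |s - c| = |(|c| - 1)| := by
    rw [hs]
    rcases lt_trichotomy c 0 with hc | hc | hc
    · rw [if_neg hc.ne, Real.sign_of_neg hc, abs_of_neg hc]
      congr 1; ring
    · simp [hc]
    · rw [if_neg hc.ne', Real.sign_of_pos hc, abs_of_pos hc, abs_sub_comm]
  rw [hcoef, norm_smul, Complex.norm_real, Real.norm_eq_abs, hseq]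
  calc |(|c| - 1)| * ‖v‖ = |(|c| - 1) * ‖v‖| := by
        rw [abs_mul, abs_of_nonneg (norm_nonneg v)]
    _ = |‖(c : ℂ) • v‖ - ‖Matrix.toEuclideanLin U v‖| := by
        rw [hUv, hcv]; congr 1; ring
    _ ≤ _ := hle

lemma one_kron_diag_mulVec {dA dB : ℕ} (d : Fin dB → ℂ) (w : Fin dA × Fin dB → ℂ)
    (a : Fin dA) (b : Fin dB) :
    (((1 : Matrix (Fin dA) (Fin dA) ℂ) ⊗ₖ Matrix.diagonal d) *ᵥ w) (a, b) = d b * w (a, b) := by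
  simp [Matrix.mulVec, dotProduct, Fintype.sum_prod_type, Matrix.one_apply,
    Matrix.diagonal_apply, ite_and, mul_ite, mul_assoc, Finset.sum_ite_eq, Finset.sum_ite_eq']

lemma key_ineq {dA dB : ℕ} {U : Matrix (Fin dA) (Fin dA) ℂ}
    (hU : U ∈ Matrix.unitaryGroup (Fin dA) ℂ) (lam : Fin dB → ℝ)
    (Φ : EuclideanSpace ℂ (Fin dA × Fin dB)) :
    ‖Matrix.toEuclideanLin ((1 : Matrix (Fin dA) (Fin dA) ℂ) ⊗ₖ
        Matrix.diagonal (fun b =>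
          (if lam b = 0 then 1 else ((Real.sign (lam b) : ℝ) : ℂ)) - ((lam b : ℝ) : ℂ))) Φ‖ ≤
      ‖Matrix.toEuclideanLin ((1 : Matrix (Fin dA) (Fin dA) ℂ) ⊗ₖ
          Matrix.diagonal (fun b => ((lam b : ℝ) : ℂ))) Φ -
        Matrix.toEuclideanLin (U ⊗ₖ (1 : Matrix (Fin dB) (Fin dB) ℂ)) Φ‖ := by
  have expand : ∀ x : EuclideanSpace ℂ (Fin dA × Fin dB),
      ‖x‖ = Real.sqrt (∑ b, ∑ a, ‖x (a, b)‖ ^ 2) := by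
    intro x
    rw [EuclideanSpace.norm_eq]
    congr 1
    rw [Fintype.sum_prod_type]
    exact Finset.sum_comm
  rw [expand, expand]
  apply Real.sqrt_le_sqrt
  apply Finset.sum_le_sum
  intro b _
  set vb : EuclideanSpace ℂ (Fin dA) := (WithLp.equiv 2 _).symm (fun a => Φ (a, b)) with hvb
  have hb := slice_ineq hU (lam b) vb
  have hb2 : ‖((if lam b = 0 then 1 else ((Real.sign (lam b) : ℝ) : ℂ)) - ((lam b : ℝ) : ℂ)) • vb‖ ^ 2 ≤
      ‖((lam b : ℝ) : ℂ) • vb - Matrix.toEuclideanLin U vb‖ ^ 2 :=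
    pow_le_pow_left₀ (norm_nonneg _) hb 2
  rw [normsq_eucl, normsq_eucl] at hb2
  have e1 : ∀ a, (Matrix.toEuclideanLin ((1 : Matrix (Fin dA) (Fin dA) ℂ) ⊗ₖ
      Matrix.diagonal (fun b =>
        (if lam b = 0 then 1 else ((Real.sign (lam b) : ℝ) : ℂ)) - ((lam b : ℝ) : ℂ))) Φ) (a, b) =
      (((if lam b = 0 then 1 else ((Real.sign (lam b) : ℝ) : ℂ)) - ((lam b : ℝ) : ℂ)) • vb) a := by
    intro a
    simp [Matrix.toEuclideanLin_apply, one_kron_diag_mulVec, hvb]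
  have e2 : ∀ a, ((Matrix.toEuclideanLin ((1 : Matrix (Fin dA) (Fin dA) ℂ) ⊗ₖ
      Matrix.diagonal (fun b => ((lam b : ℝ) : ℂ))) Φ -
      Matrix.toEuclideanLin (U ⊗ₖ (1 : Matrix (Fin dB) (Fin dB) ℂ)) Φ) (a, b)) =
      (((lam b : ℝ) : ℂ) • vb - Matrix.toEuclideanLin U vb) a := by
    intro a
    simp [Matrix.toEuclideanLin_apply, hvb, Matrix.mulVec, dotProduct,
      Fintype.sum_prod_type, Matrix.one_apply, Matrix.diagonal_apply, ite_and, mul_ite, ite_mul,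
      zero_mul, mul_zero, Finset.sum_ite_eq, Finset.sum_ite_eq']
  calc ∑ a, ‖(Matrix.toEuclideanLin ((1 : Matrix (Fin dA) (Fin dA) ℂ) ⊗ₖ
        Matrix.diagonal (fun b =>
          (if lam b = 0 then 1 else ((Real.sign (lam b) : ℝ) : ℂ)) - ((lam b : ℝ) : ℂ))) Φ) (a, b)‖ ^ 2
      = ∑ a, ‖(((if lam b = 0 then 1 else ((Real.sign (lam b) : ℝ) : ℂ)) - ((lam b : ℝ) : ℂ)) • vb) a‖ ^ 2 :=
        Finset.sum_congr rfl fun a _ => by rw [e1]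
    _ ≤ ∑ a, ‖(((lam b : ℝ) : ℂ) • vb - Matrix.toEuclideanLin U vb) a‖ ^ 2 := hb2
    _ = _ := Finset.sum_congr rfl fun a _ => by rw [e2]

end RegularizeAux

/-- The regularization `T̂` of a Hermitian operator `T`: in an eigenbasis of `T`, each nonzero
eigenvalue is replaced by its sign and each zero eigenvalue by `1`.  This agrees with the
definition `T̂ = (T + P)·|T + P|⁻¹`, where `P` is the orthogonal projection onto `ker T`. -/
noncomputable def regularize {d : ℕ} {T : Matrix (Fin d) (Fin d) ℂ} (hT : T.IsHermitian) :
    Matrix (Fin d) (Fin d) ℂ :=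
  (hT.eigenvectorUnitary : Matrix (Fin d) (Fin d) ℂ) *
    Matrix.diagonal (fun i =>
      if hT.eigenvalues i = 0 then 1 else ((Real.sign (hT.eigenvalues i) : ℝ) : ℂ)) *
    star (hT.eigenvectorUnitary : Matrix (Fin d) (Fin d) ℂ)

/-- If `‖(I ⊗ T)ψ − (U ⊗ I)ψ‖ ≤ ε` for a Hermitian `T` and a unitary `U`, then the
regularization `T̂` of `T` is unitary, `‖(I ⊗ T̂)ψ − (I ⊗ T)ψ‖ ≤ ε`, and
`‖(I ⊗ T̂)ψ − (U ⊗ I)ψ‖ ≤ 2ε`. -/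
theorem regularize_close {dA dB : ℕ} (ψ : EuclideanSpace ℂ (Fin dA × Fin dB))
    (T : Matrix (Fin dB) (Fin dB) ℂ) (hT : T.IsHermitian)
    (U : Matrix (Fin dA) (Fin dA) ℂ) (hU : U ∈ Matrix.unitaryGroup (Fin dA) ℂ)
    (ε : ℝ)
    (h : ‖Matrix.toEuclideanLin ((1 : Matrix (Fin dA) (Fin dA) ℂ) ⊗ₖ T) ψ -
          Matrix.toEuclideanLin (U ⊗ₖ (1 : Matrix (Fin dB) (Fin dB) ℂ)) ψ‖ ≤ ε) :
    regularize hT ∈ Matrix.unitaryGroup (Fin dB) ℂ ∧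
    ‖Matrix.toEuclideanLin ((1 : Matrix (Fin dA) (Fin dA) ℂ) ⊗ₖ regularize hT) ψ -
        Matrix.toEuclideanLin ((1 : Matrix (Fin dA) (Fin dA) ℂ) ⊗ₖ T) ψ‖ ≤ ε ∧
    ‖Matrix.toEuclideanLin ((1 : Matrix (Fin dA) (Fin dA) ℂ) ⊗ₖ regularize hT) ψ -
        Matrix.toEuclideanLin (U ⊗ₖ (1 : Matrix (Fin dB) (Fin dB) ℂ)) ψ‖ ≤ 2 * ε := by
  classical
  set V : Matrix (Fin dB) (Fin dB) ℂ := (hT.eigenvectorUnitary : Matrix (Fin dB) (Fin dB) ℂ)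
    with hVdef
  set lam : Fin dB → ℝ := hT.eigenvalues with hlam
  set σd : Fin dB → ℂ := fun i => if lam i = 0 then 1 else ((Real.sign (lam i) : ℝ) : ℂ) with hσd
  have hV : V ∈ Matrix.unitaryGroup (Fin dB) ℂ := hT.eigenvectorUnitary.2
  have hentry : ∀ i, σd i * star (σd i) = 1 := by
    intro i
    rcases lt_trichotomy (lam i) 0 with hc | hc | hc
    · simp [hσd, if_neg hc.ne, Real.sign_of_neg hc]
    · simp [hσd, hc]
    · simp [hσd, if_neg hc.ne', Real.sign_of_pos hc]
  have hSig : Matrix.diagonal σd ∈ Matrix.unitaryGroup (Fin dB) ℂ := by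
    rw [Matrix.mem_unitaryGroup_iff, Matrix.star_eq_conjTranspose,
      Matrix.diagonal_conjTranspose, Matrix.diagonal_mul_diagonal]
    ext i j
    by_cases hij : i = j
    · subst hij
      simp only [Matrix.diagonal_apply_eq, Matrix.one_apply_eq, Pi.star_apply]
      exact hentry i
    · rw [Matrix.diagonal_apply_ne _ hij, Matrix.one_apply_ne hij]
  have hreg : regularize hT = V * Matrix.diagonal σd * star V := rfl
  have hreg_mem : regularize hT ∈ Matrix.unitaryGroup (Fin dB) ℂ := by
    rw [hreg]
    have hVs : star V ∈ Matrix.unitaryGroup (Fin dB) ℂ := by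
      rw [Matrix.mem_unitaryGroup_iff, star_star]
      exact Matrix.mem_unitaryGroup_iff'.mp hV
    exact mul_mem (mul_mem hV hSig) hVs
  -- spectral theorem
  have hspec : T = V * Matrix.diagonal (fun i => ((lam i : ℝ) : ℂ)) * star V := by
    have := hT.spectral_theorem
    rw [Unitary.conjStarAlgAut_apply] at this
    exact this
  -- factorizations
  have f1 : (1 : Matrix (Fin dA) (Fin dA) ℂ) ⊗ₖ T =
      ((1 : Matrix (Fin dA) (Fin dA) ℂ) ⊗ₖ V) *
        ((1 : Matrix (Fin dA) (Fin dA) ℂ) ⊗ₖ Matrix.diagonal (fun i => ((lam i : ℝ) : ℂ))) *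
        ((1 : Matrix (Fin dA) (Fin dA) ℂ) ⊗ₖ star V) := by
    rw [← Matrix.mul_kronecker_mul, ← Matrix.mul_kronecker_mul, one_mul, one_mul, ← hspec]
  have f2 : (1 : Matrix (Fin dA) (Fin dA) ℂ) ⊗ₖ regularize hT =
      ((1 : Matrix (Fin dA) (Fin dA) ℂ) ⊗ₖ V) *
        ((1 : Matrix (Fin dA) (Fin dA) ℂ) ⊗ₖ Matrix.diagonal σd) *
        ((1 : Matrix (Fin dA) (Fin dA) ℂ) ⊗ₖ star V) := by
    rw [← Matrix.mul_kronecker_mul, ← Matrix.mul_kronecker_mul, one_mul, one_mul, ← hreg]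
  have f3 : U ⊗ₖ (1 : Matrix (Fin dB) (Fin dB) ℂ) =
      ((1 : Matrix (Fin dA) (Fin dA) ℂ) ⊗ₖ V) *
        (U ⊗ₖ (1 : Matrix (Fin dB) (Fin dB) ℂ)) *
        ((1 : Matrix (Fin dA) (Fin dA) ℂ) ⊗ₖ star V) := by
    rw [← Matrix.mul_kronecker_mul, ← Matrix.mul_kronecker_mul]
    simp only [one_mul, mul_one]
    rw [Matrix.mem_unitaryGroup_iff.mp hV]
  set Φ : EuclideanSpace ℂ (Fin dA × Fin dB) :=
    Matrix.toEuclideanLin ((1 : Matrix (Fin dA) (Fin dA) ℂ) ⊗ₖ star V) ψ with hΦ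
  have hV1 : (1 : Matrix (Fin dA) (Fin dA) ℂ) ⊗ₖ V ∈ Matrix.unitaryGroup (Fin dA × Fin dB) ℂ :=
    kron_mem_unitary (one_mem _) hV
  -- rewrite the three vectors
  have g1 : Matrix.toEuclideanLin ((1 : Matrix (Fin dA) (Fin dA) ℂ) ⊗ₖ T) ψ =
      Matrix.toEuclideanLin ((1 : Matrix (Fin dA) (Fin dA) ℂ) ⊗ₖ V)
        (Matrix.toEuclideanLin
          ((1 : Matrix (Fin dA) (Fin dA) ℂ) ⊗ₖ Matrix.diagonal (fun i => ((lam i : ℝ) : ℂ))) Φ) := by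
    rw [f1, toEuclideanLin_mul_apply, toEuclideanLin_mul_apply, hΦ]
  have g2 : Matrix.toEuclideanLin ((1 : Matrix (Fin dA) (Fin dA) ℂ) ⊗ₖ regularize hT) ψ =
      Matrix.toEuclideanLin ((1 : Matrix (Fin dA) (Fin dA) ℂ) ⊗ₖ V)
        (Matrix.toEuclideanLin ((1 : Matrix (Fin dA) (Fin dA) ℂ) ⊗ₖ Matrix.diagonal σd) Φ) := by
    rw [f2, toEuclideanLin_mul_apply, toEuclideanLin_mul_apply, hΦ]
  have g3 : Matrix.toEuclideanLin (U ⊗ₖ (1 : Matrix (Fin dB) (Fin dB) ℂ)) ψ =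
      Matrix.toEuclideanLin ((1 : Matrix (Fin dA) (Fin dA) ℂ) ⊗ₖ V)
        (Matrix.toEuclideanLin (U ⊗ₖ (1 : Matrix (Fin dB) (Fin dB) ℂ)) Φ) := by
    conv_lhs => rw [f3]
    rw [toEuclideanLin_mul_apply, toEuclideanLin_mul_apply, hΦ]
  -- key norms
  have hdiag_sub : Matrix.diagonal σd - Matrix.diagonal (fun i => ((lam i : ℝ) : ℂ)) =
      Matrix.diagonal (fun b => (if lam b = 0 then 1 else ((Real.sign (lam b) : ℝ) : ℂ)) -
        ((lam b : ℝ) : ℂ)) := by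
    rw [Matrix.diagonal_sub]
  have claim2 : ‖Matrix.toEuclideanLin ((1 : Matrix (Fin dA) (Fin dA) ℂ) ⊗ₖ regularize hT) ψ -
      Matrix.toEuclideanLin ((1 : Matrix (Fin dA) (Fin dA) ℂ) ⊗ₖ T) ψ‖ ≤ ε := by
    rw [g1, g2, ← map_sub]
    rw [norm_toEuclideanLin_unitary hV1]
    have lhs_eq : Matrix.toEuclideanLin ((1 : Matrix (Fin dA) (Fin dA) ℂ) ⊗ₖ Matrix.diagonal σd) Φ -
        Matrix.toEuclideanLin
          ((1 : Matrix (Fin dA) (Fin dA) ℂ) ⊗ₖ Matrix.diagonal (fun i => ((lam i : ℝ) : ℂ))) Φ =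
        Matrix.toEuclideanLin ((1 : Matrix (Fin dA) (Fin dA) ℂ) ⊗ₖ
          Matrix.diagonal (fun b => (if lam b = 0 then 1 else ((Real.sign (lam b) : ℝ) : ℂ)) -
            ((lam b : ℝ) : ℂ))) Φ := by
      rw [← hdiag_sub]
      have : (1 : Matrix (Fin dA) (Fin dA) ℂ) ⊗ₖ
          (Matrix.diagonal σd - Matrix.diagonal (fun i => ((lam i : ℝ) : ℂ))) =
          (1 : Matrix (Fin dA) (Fin dA) ℂ) ⊗ₖ Matrix.diagonal σd -
          (1 : Matrix (Fin dA) (Fin dA) ℂ) ⊗ₖ Matrix.diagonal (fun i => ((lam i : ℝ) : ℂ)) := by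
        ext ⟨a, b⟩ ⟨c, d⟩
        by_cases hbd : b = d <;>
          simp [Matrix.kroneckerMap_apply, Matrix.diagonal_apply, hbd, mul_sub]
      rw [this, map_sub, LinearMap.sub_apply]
    rw [lhs_eq]
    have step := key_ineq hU lam Φ
    refine le_trans step ?_
    -- the RHS equals the hypothesis norm
    rw [g1, g3, ← map_sub, norm_toEuclideanLin_unitary hV1] at h
    exact h
  refine ⟨hreg_mem, claim2, ?_⟩
  have tri : ‖Matrix.toEuclideanLin ((1 : Matrix (Fin dA) (Fin dA) ℂ) ⊗ₖ regularize hT) ψ -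
      Matrix.toEuclideanLin (U ⊗ₖ (1 : Matrix (Fin dB) (Fin dB) ℂ)) ψ‖ ≤
      ‖Matrix.toEuclideanLin ((1 : Matrix (Fin dA) (Fin dA) ℂ) ⊗ₖ regularize hT) ψ -
        Matrix.toEuclideanLin ((1 : Matrix (Fin dA) (Fin dA) ℂ) ⊗ₖ T) ψ‖ +
      ‖Matrix.toEuclideanLin ((1 : Matrix (Fin dA) (Fin dA) ℂ) ⊗ₖ T) ψ -
        Matrix.toEuclideanLin (U ⊗ₖ (1 : Matrix (Fin dB) (Fin dB) ℂ)) ψ‖ :=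
    norm_sub_le_norm_sub_add_norm_sub _ _ _
  linarith
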